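/- Let D ⊊ ℝⁿ be a length a-John domain with center x₀ and let f : D → D' ⊂ ℝⁿ be an η-quasisymmetric homeomorphism onto a domain D' ⊊ ℝⁿ. Then D' is a length a'-John domain with center f(x₀), where a' depends only on a and η (and not on the dimension n). -/

import Mathlib

open Set Metric ENNReal

noncomputable section

variable {X : Type*} [MetricSpace X] {Y : Type*} [MetricSpace Y]

/-- Distance from a point `z` to the boundary of `D`, modeled as the distance
to the complement of `D`. -/
def bdist (D : Set X) (z : X) : ℝ := Metric.infDist z Dᶜ

/-- Distance from a set `A` to the boundary of `D`. -/
def setBdist (D A : Set X) : ℝ := sInf (bdist D '' A)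

/-- Quasihyperbolic length (variation) of `f` over the parameter set `s`, the
discretized version of `∫_γ |dz| / dist(z, ∂D)`. -/
def qhVariationOn (D : Set X) (f : ℝ → X) (s : Set ℝ) : ℝ≥0∞ :=
  ⨆ p : ℕ × { u : ℕ → ℝ // Monotone u ∧ ∀ i, u i ∈ s },
    ∑ i ∈ Finset.range p.1,
      edist (f (p.2.1 (i + 1))) (f (p.2.1 i)) /
        max (ENNReal.ofReal (bdist D (f (p.2.1 i))))
            (ENNReal.ofReal (bdist D (f (p.2.1 (i + 1)))))

/-- `f : [0,1] → D` is a curve in `D` from `x` to `y`. -/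
structure IsCurveIn (D : Set X) (f : ℝ → X) (x y : X) : Prop where
  cont : ContinuousOn f (Icc 0 1)
  mem : ∀ t ∈ Icc (0 : ℝ) 1, f t ∈ D
  source : f 0 = x
  target : f 1 = y

/-- Every pair of points of `D` can be joined by a rectifiable curve in `D`. -/
def RectifiablyConnected (D : Set X) : Prop :=
  ∀ x ∈ D, ∀ y ∈ D, ∃ f : ℝ → X, IsCurveIn D f x y ∧ eVariationOn f (Icc 0 1) < ⊤

/-- The quasihyperbolic distance in `D`. -/
def qhDist (D : Set X) (x y : X) : ℝ≥0∞ :=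
  ⨅ (f : ℝ → X) (_ : IsCurveIn D f x y ∧ eVariationOn f (Icc 0 1) < ⊤),
    qhVariationOn D f (Icc 0 1)

/-- Diameter of a set `A ⊆ D` with respect to the quasihyperbolic metric of `D`. -/
def qhDiam (D : Set X) (A : Set X) : ℝ≥0∞ := ⨆ x ∈ A, ⨆ y ∈ A, qhDist D x y

/-- `D` is a length `a`-John space with center `x₀`: every point can be joined to `x₀`
by an `a`-carrot arc, i.e. `ℓ(α[x,z]) ≤ a · dist(z, ∂D)` for every `z` on the arc. -/
def IsLengthJohn (D : Set X) (a : ℝ) (x₀ : X) : Prop :=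
  ∀ x ∈ D, ∃ f : ℝ → X, IsCurveIn D f x x₀ ∧
    ∀ t ∈ Icc (0 : ℝ) 1, eVariationOn f (Icc 0 t) ≤ ENNReal.ofReal (a * bdist D (f t))

/-- `D` is locally `(lam, c)`-quasiconvex: any two points of `B(x, lam·dist(x,∂D))`
can be joined by a `c`-quasiconvex curve in `D`. -/
def LocQuasiconvex (D : Set X) (lam c : ℝ) : Prop :=
  ∀ x ∈ D, ∀ y ∈ D, ∀ z ∈ D,
    dist y x < lam * bdist D x → dist z x < lam * bdist D x →
      ∃ f : ℝ → X, IsCurveIn D f y z ∧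
        eVariationOn f (Icc 0 1) ≤ ENNReal.ofReal (c * dist y z)

/-- `η` is a quasisymmetry control function: an increasing self-homeomorphism of `[0, ∞)`. -/
structure QSControl (η : ℝ → ℝ) : Prop where
  mono : StrictMonoOn η (Ici 0)
  cont : ContinuousOn η (Ici 0)
  zero : η 0 = 0
  surj : ∀ s : ℝ, 0 ≤ s → ∃ t : ℝ, 0 ≤ t ∧ η t = s

/-- `f` is `η`-quasisymmetric on `D`. -/
def IsQSOn (f : X → Y) (D : Set X) (η : ℝ → ℝ) : Prop :=
  ∀ x ∈ D, ∀ a ∈ D, ∀ b ∈ D, ∀ t : ℝ, 0 ≤ t →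
    dist x a ≤ t * dist x b → dist (f x) (f a) ≤ η t * dist (f x) (f b)

/-- `f` is a homeomorphism from `D` onto `D'` with inverse `g`. -/
def IsHomeoOn (f : X → Y) (g : Y → X) (D : Set X) (D' : Set Y) : Prop :=
  ContinuousOn f D ∧ ContinuousOn g D' ∧ MapsTo f D D' ∧ MapsTo g D' D ∧ InvOn g f D D'

end
namespace JohnProof

open Filter Topology

variable {X : Type*} [MetricSpace X] {Y : Type*} [MetricSpace Y]

theorem bdist_pos {D : Set X} (hD : IsOpen D) {x : X} (hx : x ∈ D) (hDc : Dᶜ.Nonempty) :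
    0 < bdist D x :=
  (hD.isClosed_compl.notMem_iff_infDist_pos hDc).1 (by simpa using hx)

theorem mem_of_dist_lt_bdist {D : Set X} {x y : X} (h : dist y x < bdist D x) : y ∈ D := by
  by_contra hy
  exact absurd (Metric.infDist_le_dist_of_mem (show y ∈ Dᶜ from hy)) (by rw [dist_comm] at h; exact not_le.2 h)

theorem bdist_le_add {D : Set X} (x y : X) : bdist D x ≤ bdist D y + dist x y :=
  Metric.infDist_le_infDist_add_dist

theorem bdist_nonneg {D : Set X} (x : X) : 0 ≤ bdist D x := Metric.infDist_nonneg

/-- variation bound for maps with a Lipschitz-type estimate on an interval -/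
theorem evar_le_of_dist_le {f : ℝ → X} {a b L : ℝ} (hab : a ≤ b) (hL : 0 ≤ L)
    (h : ∀ s ∈ Icc a b, ∀ t ∈ Icc a b, s ≤ t → dist (f s) (f t) ≤ L * (t - s)) :
    eVariationOn f (Icc a b) ≤ ENNReal.ofReal (L * (b - a)) := by
  apply iSup_le
  rintro ⟨n, u, hu, us⟩
  have key : ∀ i, edist (f (u (i + 1))) (f (u i)) ≤ ENNReal.ofReal (L * (u (i+1) - u i)) := by
    intro i
    rw [edist_dist, dist_comm]
    exact ENNReal.ofReal_le_ofReal (h _ (us i) _ (us (i+1)) (hu (Nat.le_succ i)))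
  calc ∑ i ∈ Finset.range n, edist (f (u (i + 1))) (f (u i))
      ≤ ∑ i ∈ Finset.range n, ENNReal.ofReal (L * (u (i+1) - u i)) :=
        Finset.sum_le_sum fun i _ => key i
    _ = ENNReal.ofReal (∑ i ∈ Finset.range n, L * (u (i+1) - u i)) := by
        rw [ENNReal.ofReal_sum_of_nonneg]
        intro i _
        have : u i ≤ u (i+1) := hu (Nat.le_succ i)
        exact mul_nonneg hL (by linarith)
    _ ≤ ENNReal.ofReal (L * (b - a)) := by
        apply ENNReal.ofReal_le_ofReal
        rw [← Finset.mul_sum]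
        apply mul_le_mul_of_nonneg_left _ hL
        rcases Nat.eq_zero_or_pos n with hn | hn
        · simp [hn, sub_nonneg.2 hab]
        · rw [Finset.sum_range_sub (f := u)]
          have h1 : u 0 ∈ Icc a b := us 0
          have h2 : u n ∈ Icc a b := us n
          have := h1.1; have := h2.2
          linarith

theorem evar_Icc_add_Icc (f : ℝ → X) {a b c : ℝ} (hab : a ≤ b) (hbc : b ≤ c) :
    eVariationOn f (Icc a b) + eVariationOn f (Icc b c) = eVariationOn f (Icc a c) := by
  have h := eVariationOn.Icc_add_Icc f (s := Icc a c) hab hbc ⟨hab, hbc⟩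
  rw [Icc_inter_Icc, Icc_inter_Icc, Icc_inter_Icc] at h
  simpa [max_eq_left hab, max_eq_right hab, min_eq_right hbc, min_eq_left hbc,
    min_eq_left (le_refl c), max_eq_left (le_refl a)] using h

/-- chain lemma: improved contraction along chains in a connected set -/
theorem chain_bound {f : X → Y} {D : Set X} {η : ℝ → ℝ} (hconn : IsPreconnected D)
    (hqs : IsQSOn f D η) {σ : ℝ} (hσ0 : 0 < σ) (hσ1 : σ ≤ 1) (hησ : η σ ≤ 1 / 2)
    (hη1 : 0 ≤ η 1) {u z base : X} (hu : u ∈ D) (hz : z ∈ D) (hb : base ∈ D) (m : ℕ)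
    (hdist : dist u z ≤ σ ^ m * dist u base) :
    dist (f u) (f z) ≤ η 1 * ((1 / 2) ^ m * dist (f u) (f base)) := by
  have key : ∀ k : ℕ, ∃ w ∈ D, dist u w = σ ^ k * dist u base ∧
      dist (f u) (f w) ≤ (1 / 2 : ℝ) ^ k * dist (f u) (f base) := by
    intro k
    induction k with
    | zero => exact ⟨base, hb, by simp, by simp⟩
    | succ k ih =>
      obtain ⟨w, hwD, hwd, hwf⟩ := ih
      have hcont : ContinuousOn (fun y => dist u y) D :=
        (continuous_const.dist continuous_id).continuousOn
      have hmem : σ ^ (k + 1) * dist u base ∈ Icc (dist u u) (dist u w) := by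
        rw [dist_self, hwd]
        constructor
        · positivity
        · rw [pow_succ, mul_comm (σ ^ k) σ, mul_assoc]
          have : σ * (σ ^ k * dist u base) ≤ 1 * (σ ^ k * dist u base) := by
            apply mul_le_mul_of_nonneg_right hσ1
            positivity
          simpa using this
      obtain ⟨w', hw'D, hw'⟩ := hconn.intermediate_value hu hwD hcont hmem
      have hw'' : dist u w' = σ ^ (k + 1) * dist u base := hw'
      refine ⟨w', hw'D, hw'', ?_⟩
      have htriple := hqs u hu w' hw'D w hwD σ hσ0.le
        (by rw [hw'', hwd, pow_succ, mul_comm (σ ^ k) σ, mul_assoc])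
      calc dist (f u) (f w') ≤ η σ * dist (f u) (f w) := htriple
        _ ≤ (1 / 2) * ((1 / 2 : ℝ) ^ k * dist (f u) (f base)) := by
            apply mul_le_mul hησ hwf dist_nonneg (by norm_num)
        _ = (1 / 2 : ℝ) ^ (k + 1) * dist (f u) (f base) := by ring
  obtain ⟨w, hwD, hwd, hwf⟩ := key m
  have htriple := hqs u hu z hz w hwD 1 zero_le_one (by rw [hwd]; simpa using hdist)
  calc dist (f u) (f z) ≤ η 1 * dist (f u) (f w) := htriple
    _ ≤ η 1 * ((1 / 2) ^ m * dist (f u) (f base)) := by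
        apply mul_le_mul_of_nonneg_left hwf hη1

/-- geometric sum with blocks -/
theorem blocky_geom_sum (K₀ : ℕ) (hK₀ : 1 ≤ K₀) (L : ℕ) :
    ∑ l ∈ Finset.range L, ((2 : ℝ)⁻¹) ^ (l / K₀) ≤ 2 * K₀ := by
  have hL : L ≤ K₀ * L := Nat.le_mul_of_pos_left L hK₀
  have hmono : ∑ l ∈ Finset.range L, ((2 : ℝ)⁻¹) ^ (l / K₀)
      ≤ ∑ l ∈ Finset.range (K₀ * L), ((2 : ℝ)⁻¹) ^ (l / K₀) := by
    apply Finset.sum_le_sum_of_subset_of_nonneg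
    · exact Finset.range_subset_range.2 hL
    · intro i _ _; positivity
  refine hmono.trans ?_
  have block : ∀ Q : ℕ, ∑ l ∈ Finset.range (K₀ * Q), ((2 : ℝ)⁻¹) ^ (l / K₀)
      ≤ K₀ * ∑ q ∈ Finset.range Q, ((2 : ℝ)⁻¹) ^ q := by
    intro Q
    induction Q with
    | zero => simp
    | succ Q ih =>
      rw [Nat.mul_succ, Finset.sum_range_add, Finset.sum_range_succ, mul_add]
      apply add_le_add ih
      have : ∀ j ∈ Finset.range K₀, ((2:ℝ)⁻¹) ^ ((K₀ * Q + j) / K₀) ≤ ((2:ℝ)⁻¹) ^ Q := by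
        intro j hj
        apply pow_le_pow_of_le_one (by norm_num) (by norm_num)
        rw [add_comm, Nat.add_mul_div_left _ _ (Nat.lt_of_lt_of_le Nat.zero_lt_one hK₀)]
        exact Nat.le_add_left _ _
      calc ∑ j ∈ Finset.range K₀, ((2:ℝ)⁻¹) ^ ((K₀ * Q + j) / K₀)
          ≤ ∑ j ∈ Finset.range K₀, ((2:ℝ)⁻¹) ^ Q := Finset.sum_le_sum this
        _ = K₀ * ((2:ℝ)⁻¹) ^ Q := by rw [Finset.sum_const, Finset.card_range, nsmul_eq_mul]
  refine (block L).trans ?_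
  have : ∑ q ∈ Finset.range L, ((2 : ℝ)⁻¹) ^ q ≤ 2 := by
    have := geom_sum_eq (x := (2:ℝ)⁻¹) (by norm_num) L
    rw [this]
    have h1 : (0:ℝ) ≤ ((2:ℝ)⁻¹) ^ L := by positivity
    have h2 : ((2:ℝ)⁻¹) ^ L ≤ 1 := pow_le_one₀ (by norm_num) (by norm_num)
    rw [div_le_iff_of_neg (by norm_num : ((2:ℝ)⁻¹ - 1) < 0)]
    nlinarith
  calc (K₀ : ℝ) * ∑ q ∈ Finset.range L, ((2 : ℝ)⁻¹) ^ q ≤ K₀ * 2 := by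
        apply mul_le_mul_of_nonneg_left this (by positivity)
    _ = 2 * K₀ := by ring

end JohnProof

namespace JohnProof2
open Set Metric ENNReal JohnProof Filter Topology

variable {V : Type*} [NormedAddCommGroup V] [NormedSpace ℝ V]

/-- Key distortion estimate: a quasisymmetric homeomorphism maps relative balls into
relative balls. -/
theorem qs_image_bound [ProperSpace V] {D D' : Set V} (hD : IsOpen D) (hDc : Dᶜ.Nonempty)
    (hD' : IsOpen D') (hD'c : D'ᶜ.Nonempty) {f g : V → V}
    (hf : ContinuousOn f D) (hmf : MapsTo f D D') (hmg : MapsTo g D' D)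
    (hinv : Set.RightInvOn g f D') {η : ℝ → ℝ} (hqs : IsQSOn f D η)
    {u v : V} (hu : u ∈ D) (hv : v ∈ D) {T : ℝ} (hT : 0 ≤ T)
    (huv : dist u v ≤ T * bdist D u) :
    dist (f u) (f v) ≤ η (2 * T) * bdist D' (f u) := by
  have hdu : 0 < bdist D u := bdist_pos hD hu hDc
  have hfu : f u ∈ D' := hmf hu
  have hR : 0 < bdist D' (f u) := bdist_pos hD' hfu hD'c
  obtain ⟨ξ, hξmem, hξd⟩ := (hD'.isClosed_compl).exists_infDist_eq_dist hD'c (f u)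
  set R := bdist D' (f u) with hRdef
  have hfuξ : dist (f u) ξ = R := hξd.symm
  set y : ℕ → V := fun m => f u + (1 - 1/((m:ℝ)+1)) • (ξ - f u) with hy
  have hcm : ∀ m : ℕ, 0 ≤ 1 - 1/((m:ℝ)+1) ∧ 1 - 1/((m:ℝ)+1) < 1 := by
    intro m
    have h1 : (0:ℝ) < (m:ℝ) + 1 := by positivity
    constructor
    · have : 1/((m:ℝ)+1) ≤ 1 := by
        rw [div_le_one h1]; linarith [Nat.cast_nonneg (α := ℝ) m]
      linarith
    · have : 0 < 1/((m:ℝ)+1) := by positivity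
      linarith
  have hydist : ∀ m, dist (y m) (f u) = (1 - 1/((m:ℝ)+1)) * R := by
    intro m
    rw [hy, dist_eq_norm]
    simp only [add_sub_cancel_left]
    rw [norm_smul, Real.norm_eq_abs, abs_of_nonneg (hcm m).1, ← dist_eq_norm]
    rw [dist_comm, hfuξ]
  have hyD' : ∀ m, y m ∈ D' := by
    intro m
    apply mem_of_dist_lt_bdist (D := D') (x := f u)
    rw [hydist m, ← hRdef]
    have := (hcm m).2
    nlinarith
  have hytend : Tendsto y atTop (𝓝 ξ) := by
    have h1 : Tendsto (fun m : ℕ => 1 - 1/((m:ℝ)+1)) atTop (𝓝 1) := by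
      have h2 := (tendsto_const_nhds : Tendsto (fun _ : ℕ => (1:ℝ)) atTop (𝓝 1)).sub
        tendsto_one_div_add_atTop_nhds_zero_nat
      simpa using h2
    have h2 : Tendsto y atTop (𝓝 (f u + (1:ℝ) • (ξ - f u))) :=
      tendsto_const_nhds.add (h1.smul_const _)
    simpa using h2
  set w : ℕ → V := fun m => g (y m) with hw
  have hwD : ∀ m, w m ∈ D := fun m => hmg (hyD' m)
  have hfw : ∀ m, f (w m) = y m := fun m => hinv (hyD' m)
  have hfar : ∀ᶠ m in atTop, bdist D u / 2 ≤ dist u (w m) := by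
    by_contra hcon
    rw [Filter.not_eventually] at hcon
    have hcon' : ∃ᶠ m in atTop, dist u (w m) < bdist D u / 2 :=
      hcon.mono fun m hm => lt_of_not_ge hm
    obtain ⟨φ, hφ, hφP⟩ := Filter.extraction_of_frequently_atTop hcon'
    have hball : ∀ n, w (φ n) ∈ closedBall u (bdist D u / 2) := by
      intro n
      rw [mem_closedBall, dist_comm]
      exact (hφP n).le
    obtain ⟨winf, hwinfmem, ψ, hψ, hconv⟩ :=
      (isCompact_closedBall u (bdist D u / 2)).tendsto_subseq hball
    have hwinfD : winf ∈ D := by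
      apply mem_of_dist_lt_bdist (D := D) (x := u)
      have := mem_closedBall.1 hwinfmem
      linarith
    have hfc : Tendsto (fun n => f (w (φ (ψ n)))) atTop (𝓝 (f winf)) := by
      apply (hf winf hwinfD).tendsto.comp
      rw [tendsto_nhdsWithin_iff]
      exact ⟨hconv, Filter.Eventually.of_forall fun n => hwD _⟩
    have hfc2 : Tendsto (fun n => f (w (φ (ψ n)))) atTop (𝓝 ξ) := by
      have : Tendsto (fun n => y (φ (ψ n))) atTop (𝓝 ξ) :=
        hytend.comp ((hφ.comp hψ).tendsto_atTop)
      simpa only [hfw] using this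
    have : f winf = ξ := tendsto_nhds_unique hfc hfc2
    exact hξmem (this ▸ hmf hwinfD)
  have hqsm : ∀ᶠ m in atTop, dist (f u) (f v) ≤ η (2*T) * dist (f u) (y m) := by
    refine hfar.mono fun m hm => ?_
    have h2T : (0:ℝ) ≤ 2*T := by linarith
    have hd2 : dist u v ≤ (2*T) * dist u (w m) := by
      calc dist u v ≤ T * bdist D u := huv
        _ = (2*T) * (bdist D u / 2) := by ring
        _ ≤ (2*T) * dist u (w m) := mul_le_mul_of_nonneg_left hm h2T
    have := hqs u hu v hv (w m) (hwD m) (2*T) h2T hd2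
    rwa [hfw m] at this
  have hlim : Tendsto (fun m => η (2*T) * dist (f u) (y m)) atTop (𝓝 (η (2*T) * R)) := by
    have : Tendsto (fun m => dist (f u) (y m)) atTop (𝓝 (dist (f u) ξ)) :=
      tendsto_const_nhds.dist hytend
    rw [hfuξ] at this
    exact this.const_mul _
  exact ge_of_tendsto hlim hqsm

/-! ### Polygonal curves -/

def clampU (x : ℝ) : ℝ := max 0 (min 1 x)

theorem clampU_nonneg (x : ℝ) : 0 ≤ clampU x := le_max_left _ _

theorem clampU_le_one (x : ℝ) : clampU x ≤ 1 := max_le zero_le_one (min_le_left _ _)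

theorem clampU_of_nonpos {x : ℝ} (h : x ≤ 0) : clampU x = 0 := by
  rw [clampU, max_eq_left]
  exact (min_le_right _ _).trans h

theorem clampU_of_one_le {x : ℝ} (h : 1 ≤ x) : clampU x = 1 := by
  rw [clampU, min_eq_left h, max_eq_right zero_le_one]

theorem clampU_lip (x y : ℝ) : |clampU x - clampU y| ≤ |x - y| := by
  calc |clampU x - clampU y| ≤ max |(0:ℝ) - 0| |min 1 x - min 1 y| :=
        abs_max_sub_max_le_max _ _ _ _
    _ ≤ max 0 (max |(1:ℝ) - 1| |x - y|) := by
        apply max_le_max (by simp) (abs_min_sub_min_le_max _ _ _ _)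
    _ ≤ |x - y| := by simp [abs_nonneg]

theorem clampU_continuous : Continuous clampU :=
  Continuous.max continuous_const (Continuous.min continuous_const continuous_id)

/-- A polygonal curve through the vertices `u 0, u 1, ..., u (m+1)`, parametrized on `[0,1]`. -/
def polyline (u : ℕ → V) (m : ℕ) (s : ℝ) : V :=
  u 0 + ∑ l ∈ Finset.range (m + 1), clampU (s * ((m:ℝ) + 1) - l) • (u (l + 1) - u l)

theorem polyline_continuous (u : ℕ → V) (m : ℕ) : Continuous (polyline u m) := by
  apply continuous_const.add
  apply continuous_finset_sum
  intro l _
  exact ((clampU_continuous.comp (by continuity)).smul continuous_const)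

theorem polyline_zero (u : ℕ → V) (m : ℕ) : polyline u m 0 = u 0 := by
  rw [polyline]
  have : ∀ l ∈ Finset.range (m+1), clampU (0 * ((m:ℝ) + 1) - l) • (u (l + 1) - u l) = 0 := by
    intro l _
    rw [clampU_of_nonpos (by simp [Nat.cast_nonneg]), zero_smul]
  rw [Finset.sum_congr rfl this]
  simp

theorem polyline_one (u : ℕ → V) (m : ℕ) : polyline u m 1 = u (m + 1) := by
  rw [polyline]
  have : ∀ l ∈ Finset.range (m+1), clampU (1 * ((m:ℝ) + 1) - l) • (u (l + 1) - u l)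
      = u (l+1) - u l := by
    intro l hl
    rw [Finset.mem_range] at hl
    have hl' : (l : ℝ) + 1 ≤ (m : ℝ) + 1 := by
      have : (l:ℝ) ≤ m := by exact_mod_cast Nat.lt_succ_iff.1 hl
      linarith
    rw [clampU_of_one_le (by linarith), one_smul]
  rw [Finset.sum_congr rfl this, Finset.sum_range_sub (f := u)]
  abel

theorem polyline_piece (u : ℕ → V) (m : ℕ) {k : ℕ} (hk : k ≤ m) {s : ℝ}
    (h1 : (k:ℝ) ≤ s * ((m:ℝ) + 1)) (h2 : s * ((m:ℝ) + 1) ≤ (k:ℝ) + 1) :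
    polyline u m s = u k + clampU (s * ((m:ℝ) + 1) - k) • (u (k + 1) - u k) := by
  rw [polyline]
  have hsplit : Finset.range (m+1) = Finset.range k ∪ Finset.Ico k (m+1) := by
    simp only [Finset.range_eq_Ico]
    exact (Finset.Ico_union_Ico_eq_Ico (Nat.zero_le k) (Nat.le_succ_of_le hk)).symm
  have hdisj : Disjoint (Finset.range k) (Finset.Ico k (m+1)) := by
    rw [Finset.range_eq_Ico]
    exact Finset.Ico_disjoint_Ico_consecutive 0 k (m+1)
  rw [hsplit, Finset.sum_union hdisj]
  have hfirst : ∑ l ∈ Finset.range k, clampU (s * ((m:ℝ) + 1) - l) • (u (l + 1) - u l)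
      = u k - u 0 := by
    have : ∀ l ∈ Finset.range k, clampU (s * ((m:ℝ) + 1) - l) • (u (l + 1) - u l)
        = u (l+1) - u l := by
      intro l hl
      rw [Finset.mem_range] at hl
      have : (l:ℝ) + 1 ≤ k := by exact_mod_cast hl
      rw [clampU_of_one_le (by linarith), one_smul]
    rw [Finset.sum_congr rfl this, Finset.sum_range_sub (f := u)]
  have hsecond : ∑ l ∈ Finset.Ico k (m+1), clampU (s * ((m:ℝ) + 1) - l) • (u (l + 1) - u l)
      = clampU (s * ((m:ℝ) + 1) - k) • (u (k + 1) - u k) := by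
    have hmem : k ∈ Finset.Ico k (m+1) := by
      rw [Finset.mem_Ico]; exact ⟨le_rfl, Nat.lt_succ_of_le hk⟩
    rw [Finset.sum_eq_single_of_mem k hmem]
    intro l hl hlk
    rw [Finset.mem_Ico] at hl
    have hlk' : k + 1 ≤ l := Nat.succ_le_of_lt (lt_of_le_of_ne hl.1 (Ne.symm hlk))
    have : (k:ℝ) + 1 ≤ l := by exact_mod_cast hlk'
    rw [clampU_of_nonpos (by linarith), zero_smul]
  rw [hfirst, hsecond]
  abel

theorem polyline_piece_dist_right (u : ℕ → V) (m : ℕ) {k : ℕ} (hk : k ≤ m) {s : ℝ}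
    (h1 : (k:ℝ) ≤ s * ((m:ℝ) + 1)) (h2 : s * ((m:ℝ) + 1) ≤ (k:ℝ) + 1) :
    dist (polyline u m s) (u (k+1)) ≤ dist (u (k+1)) (u k) := by
  rw [polyline_piece u m hk h1 h2]
  set c := clampU (s * ((m:ℝ) + 1) - k) with hc
  have h0 : 0 ≤ c := clampU_nonneg _
  have h1' : c ≤ 1 := clampU_le_one _
  have : u k + c • (u (k + 1) - u k) - u (k+1) = (c - 1) • (u (k+1) - u k) := by
    rw [sub_smul, one_smul]
    abel
  rw [dist_eq_norm, this, norm_smul, Real.norm_eq_abs, abs_of_nonpos (by linarith),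
    dist_eq_norm]
  have hn : (0:ℝ) ≤ ‖u (k+1) - u k‖ := norm_nonneg _
  nlinarith

theorem polyline_piece_evar (u : ℕ → V) (m : ℕ) {k : ℕ} (hk : k ≤ m) {A B : ℝ}
    (hAB : A ≤ B) (hA : (k:ℝ) ≤ A * ((m:ℝ) + 1)) (hB : B * ((m:ℝ) + 1) ≤ (k:ℝ) + 1) :
    eVariationOn (polyline u m) (Icc A B) ≤ ENNReal.ofReal (dist (u (k+1)) (u k)) := by
  have hm1 : (0:ℝ) < (m:ℝ) + 1 := by positivity
  set L : ℝ := ((m:ℝ) + 1) * ‖u (k+1) - u k‖ with hL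
  have hL0 : 0 ≤ L := by positivity
  have key : ∀ s ∈ Icc A B, ∀ t ∈ Icc A B, s ≤ t →
      dist (polyline u m s) (polyline u m t) ≤ L * (t - s) := by
    intro s hs t ht hst
    have hs1 : (k:ℝ) ≤ s * ((m:ℝ) + 1) := le_trans hA (by nlinarith [hs.1])
    have hs2 : s * ((m:ℝ) + 1) ≤ (k:ℝ) + 1 := le_trans (by nlinarith [hs.2]) hB
    have ht1 : (k:ℝ) ≤ t * ((m:ℝ) + 1) := le_trans hA (by nlinarith [ht.1])
    have ht2 : t * ((m:ℝ) + 1) ≤ (k:ℝ) + 1 := le_trans (by nlinarith [ht.2]) hB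
    rw [polyline_piece u m hk hs1 hs2, polyline_piece u m hk ht1 ht2]
    rw [dist_eq_norm]
    have heq : u k + clampU (s * ((m:ℝ) + 1) - k) • (u (k + 1) - u k)
        - (u k + clampU (t * ((m:ℝ) + 1) - k) • (u (k + 1) - u k))
        = (clampU (s * ((m:ℝ) + 1) - k) - clampU (t * ((m:ℝ) + 1) - k)) • (u (k+1) - u k) := by
      rw [sub_smul]; abel
    rw [heq, norm_smul, Real.norm_eq_abs]
    have hlip := clampU_lip (s * ((m:ℝ) + 1) - k) (t * ((m:ℝ) + 1) - k)
    have habs : |s * ((m:ℝ) + 1) - k - (t * ((m:ℝ) + 1) - k)| = (t - s) * ((m:ℝ) + 1) := by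
      have : s * ((m:ℝ) + 1) - k - (t * ((m:ℝ) + 1) - k) = -((t - s) * ((m:ℝ) + 1)) := by ring
      rw [this, abs_neg, abs_of_nonneg (by nlinarith)]
    rw [habs] at hlip
    calc |clampU (s * ((m:ℝ) + 1) - k) - clampU (t * ((m:ℝ) + 1) - k)| * ‖u (k+1) - u k‖
        ≤ ((t - s) * ((m:ℝ) + 1)) * ‖u (k+1) - u k‖ :=
          mul_le_mul_of_nonneg_right hlip (norm_nonneg _)
      _ = L * (t - s) := by rw [hL]; ring
  have := evar_le_of_dist_le hAB hL0 key
  refine this.trans (ENNReal.ofReal_le_ofReal ?_)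
  have hBA : B - A ≤ 1 / ((m:ℝ) + 1) := by
    rw [le_div_iff₀ hm1]
    nlinarith
  calc L * (B - A) ≤ L * (1 / ((m:ℝ) + 1)) := by
        apply mul_le_mul_of_nonneg_left hBA hL0
    _ = ‖u (k+1) - u k‖ * (((m:ℝ) + 1) * (1 / ((m:ℝ) + 1))) := by rw [hL]; ring
    _ = ‖u (k+1) - u k‖ := by rw [mul_one_div_cancel (ne_of_gt hm1), mul_one]
    _ = dist (u (k+1)) (u k) := (dist_eq_norm _ _).symm

theorem polyline_evar_le (u : ℕ → V) (m : ℕ) : ∀ k, k ≤ m → ∀ T : ℝ,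
    (k:ℝ) ≤ T * ((m:ℝ) + 1) → T * ((m:ℝ) + 1) ≤ (k:ℝ) + 1 →
    eVariationOn (polyline u m) (Icc 0 T) ≤
      ENNReal.ofReal (∑ l ∈ Finset.range (k+1), dist (u (l+1)) (u l)) := by
  have hm1 : (0:ℝ) < (m:ℝ) + 1 := by positivity
  intro k
  induction k with
  | zero =>
    intro hk T hT1 hT2
    simp only [Nat.cast_zero] at hT1 hT2
    have hT0 : 0 ≤ T := by nlinarith
    have := polyline_piece_evar u m (Nat.zero_le m) hT0
      (by simp : ((0:ℕ):ℝ) ≤ 0 * ((m:ℝ) + 1)) (by simpa using hT2)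
    refine this.trans (ENNReal.ofReal_le_ofReal ?_)
    simp [Finset.sum_range_one]
  | succ k ih =>
    intro hk T hT1 hT2
    have hk' : k ≤ m := Nat.le_of_succ_le hk
    set B : ℝ := ((k:ℝ)+1)/((m:ℝ)+1) with hBdef
    have hBmul : B * ((m:ℝ) + 1) = (k:ℝ) + 1 := by
      rw [hBdef, div_mul_cancel₀]
      exact ne_of_gt hm1
    have hcast : ((k+1 : ℕ):ℝ) = (k:ℝ) + 1 := by push_cast; ring
    have hB0 : 0 ≤ B := by positivity
    have hBT : B ≤ T := by
      rw [hcast] at hT1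
      rw [hBdef, div_le_iff₀ hm1]
      linarith
    have hsplit := evar_Icc_add_Icc (polyline u m) hB0 hBT
    have h1 : eVariationOn (polyline u m) (Icc 0 B) ≤
        ENNReal.ofReal (∑ l ∈ Finset.range (k+1), dist (u (l+1)) (u l)) := by
      apply ih hk' B
      · rw [hBmul]; linarith
      · rw [hBmul]
    have h2 : eVariationOn (polyline u m) (Icc B T) ≤
        ENNReal.ofReal (dist (u (k+2)) (u (k+1))) := by
      have := polyline_piece_evar u m (k := k+1) hk hBT
        (by rw [hcast, hBmul]) (by rw [hcast]; rw [hcast] at hT2; exact hT2)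
      convert this using 3
    rw [← hsplit]
    calc eVariationOn (polyline u m) (Icc 0 B) + eVariationOn (polyline u m) (Icc B T)
        ≤ ENNReal.ofReal (∑ l ∈ Finset.range (k+1), dist (u (l+1)) (u l)) +
          ENNReal.ofReal (dist (u (k+2)) (u (k+1))) := add_le_add h1 h2
      _ = ENNReal.ofReal (∑ l ∈ Finset.range (k+2), dist (u (l+1)) (u l)) := by
          rw [← ENNReal.ofReal_add (Finset.sum_nonneg fun l _ => dist_nonneg) dist_nonneg]
          congr 1
          rw [Finset.sum_range_succ (f := fun l => dist (u (l+1)) (u l)) (n := k+1)]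

end JohnProof2

section MainProof
open JohnProof JohnProof2 Filter Topology

set_option maxHeartbeats 8000000 in
/-- Corollary: If `D ⊊ ℝⁿ` is a length `a`-John domain with center `x₀`
and `f : D → D'` is an `η`-quasisymmetric homeomorphism onto a domain `D' ⊊ ℝⁿ`, then
`D'` is a length `a'`-John domain with center `f(x₀)`, where `a'` depends only on `a`
and `η` (not on `n`). -/
theorem euclidean_john_qs_invariance (a : ℝ) (ha : 1 ≤ a) (η : ℝ → ℝ)
    (hη : QSControl η) :
    ∃ a' : ℝ, 0 < a' ∧
      ∀ (n : ℕ) (D D' : Set (EuclideanSpace ℝ (Fin n))),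
        IsOpen D → IsConnected D → D ≠ Set.univ →
        IsOpen D' → IsConnected D' → D' ≠ Set.univ →
        ∀ (f g : EuclideanSpace ℝ (Fin n) → EuclideanSpace ℝ (Fin n)),
          IsHomeoOn f g D D' → IsQSOn f D η →
          ∀ x₀ ∈ D, IsLengthJohn D a x₀ → IsLengthJohn D' a' (f x₀) := by
  classical
  have ha0 : (0:ℝ) < a := lt_of_lt_of_le one_pos ha
  have ηmono : MonotoneOn η (Ici 0) := hη.mono.monotoneOn
  have ηnonneg : ∀ t : ℝ, 0 ≤ t → 0 ≤ η t := by
    intro t ht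
    rcases eq_or_lt_of_le ht with h | h
    · rw [← h, hη.zero]
    · rw [← hη.zero]
      exact (hη.mono (self_mem_Ici) (mem_Ici.2 ht) h).le
  have hη1pos : 0 < η 1 := by
    rw [← hη.zero]
    exact hη.mono self_mem_Ici (mem_Ici.2 zero_le_one) one_pos
  -- the contraction scale σ
  obtain ⟨σ₀, hσ₀0, hσ₀val⟩ := hη.surj (1/2) (by norm_num)
  have hσ₀pos : 0 < σ₀ := by
    rcases eq_or_lt_of_le hσ₀0 with h | h
    · exfalso; rw [← h, hη.zero] at hσ₀val; norm_num at hσ₀val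
    · exact h
  set σ : ℝ := min σ₀ (1/2) with hσdef
  have hσpos : 0 < σ := lt_min hσ₀pos (by norm_num)
  have hσ1 : σ ≤ 1 := le_trans (min_le_right _ _) (by norm_num)
  have hησ : η σ ≤ 1/2 := by
    calc η σ ≤ η σ₀ := ηmono (mem_Ici.2 hσpos.le) (mem_Ici.2 hσ₀0) (min_le_left _ _)
      _ = 1/2 := hσ₀val
  -- the step scale c
  obtain ⟨c₄, hc₄0, hc₄val⟩ := hη.surj (1/4) (by norm_num)
  have hc₄pos : 0 < c₄ := by
    rcases eq_or_lt_of_le hc₄0 with h | h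
    · exfalso; rw [← h, hη.zero] at hc₄val; norm_num at hc₄val
    · exact h
  set c : ℝ := min (c₄/2) (1/3) with hcdef
  have hc0 : 0 < c := lt_min (by positivity) (by norm_num)
  have hc13 : c ≤ 1/3 := min_le_right _ _
  have hc1 : c ≤ 1 := hc13.trans (by norm_num)
  have hηc : η (2*c) ≤ 1/4 := by
    have h2c : 2*c ≤ c₄ := by
      have := min_le_left (c₄/2) (1/3)
      rw [hcdef]; linarith
    calc η (2*c) ≤ η c₄ := ηmono (mem_Ici.2 (by positivity)) (mem_Ici.2 hc₄0) h2c
      _ = 1/4 := hc₄val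
  -- the decay rate θ
  set θ : ℝ := 1 - c/a with hθdef
  have hca : c/a ≤ c := by
    rw [div_le_iff₀ ha0]; nlinarith
  have hθ0 : 0 < θ := by rw [hθdef]; have : c/a ≤ 1/3 := hca.trans hc13; linarith
  have hθ1 : θ < 1 := by
    rw [hθdef]
    have : 0 < c/a := by positivity
    linarith
  -- constants
  set C7 : ℝ := η (a/c) * η (2*c) with hC7def
  have hC7 : 0 ≤ C7 := mul_nonneg (ηnonneg _ (by positivity)) (ηnonneg _ (by positivity))
  set W0 : ℝ := η (2*c) * (1 + C7) with hW0def
  have hW0 : 0 ≤ W0 := mul_nonneg (ηnonneg _ (by positivity)) (by linarith)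
  have hη2cW0 : η (2*c) ≤ W0 := by
    rw [hW0def]
    nlinarith [ηnonneg (2*c) (by positivity)]
  set W1 : ℝ := η 1 * C7 with hW1def
  have hW1 : 0 ≤ W1 := mul_nonneg hη1pos.le hC7
  obtain ⟨K₀', hK₀'⟩ := exists_pow_lt_of_lt_one (show (0:ℝ) < σ/2 by positivity) hθ1
  set K₀ : ℕ := max K₀' 1 with hK₀def
  have hK₀1 : 1 ≤ K₀ := le_max_right _ _
  have hθK₀ : θ^K₀ ≤ σ/2 := by
    calc θ^K₀ ≤ θ^K₀' := pow_le_pow_of_le_one hθ0.le hθ1.le (le_max_left _ _)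
      _ ≤ σ/2 := hK₀'.le
  obtain ⟨q₀, hq₀⟩ := pow_unbounded_of_one_lt (12*a) (by norm_num : (1:ℝ) < 2)
  obtain ⟨N₀', hN₀'⟩ := exists_pow_lt_of_lt_one (show (0:ℝ) < c/(4*a) by positivity) hθ1
  set N : ℕ := max N₀' (q₀*K₀) with hNdef
  have hNdecay : a * θ^N ≤ c/4 := by
    have h1 : θ^N ≤ θ^N₀' := pow_le_pow_of_le_one hθ0.le hθ1.le (le_max_left _ _)
    have h2 : θ^N ≤ c/(4*a) := h1.trans hN₀'.le
    calc a * θ^N ≤ a * (c/(4*a)) := mul_le_mul_of_nonneg_left h2 ha0.le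
      _ = c/4 := by field_simp
  set K : ℝ := N*W0 + W1*(2*K₀) + W0 with hKdef
  have hK0 : 0 ≤ K := by positivity
  refine ⟨4/3*K + 1, by positivity, ?_⟩
  intro n D D' hDo hDconn hDne hD'o hD'conn hD'ne f g hhom hqs x₀ hx₀ hJohn
  obtain ⟨hfc, hgc, hmf, hmg, hinv⟩ := hhom
  have hDc : Dᶜ.Nonempty := Set.nonempty_compl.2 hDne
  have hD'c : D'ᶜ.Nonempty := Set.nonempty_compl.2 hD'ne
  intro x' hx'
  set x : EuclideanSpace ℝ (Fin n) := g x' with hxdef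
  have hx : x ∈ D := hmg hx'
  have hfx : f x = x' := hinv.2 hx'
  obtain ⟨α, hα, hcarrot⟩ := hJohn x hx
  have hdx : 0 < bdist D x := bdist_pos hDo hx hDc
  -- the variation function
  have hvarfin : ∀ t ∈ Icc (0:ℝ) 1, eVariationOn α (Icc 0 t) ≠ ⊤ := by
    intro t ht
    exact ne_top_of_le_ne_top ENNReal.ofReal_ne_top (hcarrot t ht)
  set Λ : ℝ → ℝ := fun t => (eVariationOn α (Icc 0 t)).toReal with hΛdef
  have hΛ0 : ∀ t, 0 ≤ Λ t := fun t => ENNReal.toReal_nonneg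
  have hΛcarrot : ∀ t ∈ Icc (0:ℝ) 1, Λ t ≤ a * bdist D (α t) := by
    intro t ht
    exact ENNReal.toReal_le_of_le_ofReal
      (mul_nonneg ha0.le (bdist_nonneg _)) (hcarrot t ht)
  have hchordvar : ∀ s t : ℝ, 0 ≤ s → s ≤ t → t ≤ 1 →
      dist (α s) (α t) + Λ s ≤ Λ t := by
    intro s t hs hst ht1
    have hadd := evar_Icc_add_Icc α hs hst
    have hfin1 : eVariationOn α (Icc 0 s) ≠ ⊤ := hvarfin s ⟨hs, hst.trans ht1⟩
    have hfin2 : eVariationOn α (Icc s t) ≠ ⊤ := by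
      apply ne_top_of_le_ne_top (hvarfin t ⟨hs.trans hst, ht1⟩)
      exact eVariationOn.mono α (Icc_subset_Icc hs le_rfl)
    have hchord : dist (α s) (α t) ≤ (eVariationOn α (Icc s t)).toReal := by
      have h1 := eVariationOn.edist_le α (show s ∈ Icc s t from ⟨le_rfl, hst⟩)
        (show t ∈ Icc s t from ⟨hst, le_rfl⟩)
      rw [edist_dist] at h1
      have := ENNReal.toReal_mono hfin2 h1
      rwa [ENNReal.toReal_ofReal dist_nonneg] at this
    have heq : Λ t = Λ s + (eVariationOn α (Icc s t)).toReal := by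
      rw [hΛdef]
      simp only
      rw [← hadd, ENNReal.toReal_add hfin1 hfin2]
    linarith
  -- the stopping process
  set Aof : ℝ → Set ℝ :=
    fun t => {s | s ∈ Icc 0 t ∧ c * bdist D (α t) ≤ dist (α s) (α t)} with hAofdef
  set T : ℕ → ℝ := fun i => (fun t => sSup (Aof t))^[i] 1 with hTdef
  have hT0 : T 0 = 1 := rfl
  have hTsucc : ∀ i, T (i+1) = sSup (Aof (T i)) := by
    intro i
    simp only [hTdef]
    exact Function.iterate_succ_apply' _ i 1
  have hAclosed : ∀ t ∈ Icc (0:ℝ) 1, IsClosed (Aof t) := by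
    intro t ht
    have heq : Aof t = Icc 0 t ∩ ((fun s => dist (α s) (α t)) ⁻¹' Ici (c * bdist D (α t))) := by
      ext s; simp [hAofdef, and_comm]
    rw [heq]
    apply ContinuousOn.preimage_isClosed_of_isClosed _ isClosed_Icc isClosed_Ici
    exact (continuous_id.dist continuous_const).comp_continuousOn
      (hα.cont.mono (Icc_subset_Icc le_rfl ht.2))
  have hAbdd : ∀ t, BddAbove (Aof t) := by
    intro t
    apply BddAbove.mono (show Aof t ⊆ Iic t from fun s hs => hs.1.2) bddAbove_Iic
  have key_mem : ∀ i, (∀ j, j < i → (Aof (T j)).Nonempty) →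
      T i ∈ Icc (0:ℝ) 1 ∧ ∀ j, j ≤ i → T i ≤ T j := by
    intro i
    induction i with
    | zero =>
      intro _
      refine ⟨by rw [hT0]; exact ⟨zero_le_one, le_rfl⟩, ?_⟩
      intro j hj
      interval_cases j
      exact le_rfl
    | succ i ih =>
      intro h
      have hi := ih (fun j hj => h j (hj.trans (Nat.lt_succ_self i)))
      have hne : (Aof (T i)).Nonempty := h i (Nat.lt_succ_self i)
      have hstep : sSup (Aof (T i)) ∈ Aof (T i) :=
        (hAclosed _ hi.1).csSup_mem hne (hAbdd _)
      have hsub : T (i+1) ∈ Icc 0 (T i) := by rw [hTsucc]; exact hstep.1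
      constructor
      · exact ⟨hsub.1, hsub.2.trans hi.1.2⟩
      · intro j hj
        rcases Nat.eq_or_lt_of_le hj with h' | h'
        · rw [h']
        · exact hsub.2.trans (hi.2 j (Nat.lt_succ_iff.1 h'))
  have hpD : ∀ i, T i ∈ Icc (0:ℝ) 1 → α (T i) ∈ D := fun i hi => hα.mem _ hi
  have key_step : ∀ i, (∀ j, j < i+1 → (Aof (T j)).Nonempty) →
      c * bdist D (α (T i)) ≤ dist (α (T (i+1))) (α (T i)) ∧
      dist (α (T (i+1))) (α (T i)) ≤ c * bdist D (α (T i)) := by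
    intro i h
    have hi := key_mem i (fun j hj => h j (hj.trans (Nat.lt_succ_self i)))
    have hne : (Aof (T i)).Nonempty := h i (Nat.lt_succ_self i)
    have hstep : sSup (Aof (T i)) ∈ Aof (T i) := (hAclosed _ hi.1).csSup_mem hne (hAbdd _)
    have hmem1 : T (i+1) ∈ Aof (T i) := by rw [hTsucc]; exact hstep
    refine ⟨hmem1.2, ?_⟩
    have hdpos : 0 < bdist D (α (T i)) := bdist_pos hDo (hpD i hi.1) hDc
    rcases eq_or_lt_of_le (hmem1.1.2 : T (i+1) ≤ T i) with heq | hlt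
    · rw [heq, dist_self]
      positivity
    · have hnotin : ∀ s, T (i+1) < s → s ≤ T i →
          dist (α s) (α (T i)) < c * bdist D (α (T i)) := by
        intro s hs1 hs2
        by_contra hcon
        push_neg at hcon
        have hsA : s ∈ Aof (T i) := ⟨⟨le_trans hmem1.1.1 hs1.le, hs2⟩, hcon⟩
        have h2 : s ≤ sSup (Aof (T i)) := le_csSup (hAbdd _) hsA
        rw [← hTsucc] at h2
        exact absurd (lt_of_lt_of_le hs1 h2) (lt_irrefl _)
      have hcw : ContinuousWithinAt α (Ioc (T (i+1)) (T i)) (T (i+1)) := by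
        apply (hα.cont _ ⟨hmem1.1.1, (hmem1.1.2).trans hi.1.2⟩).mono
        intro s hs
        exact ⟨le_trans hmem1.1.1 hs.1.le, hs.2.trans hi.1.2⟩
      have hnb : (𝓝[Ioc (T (i+1)) (T i)] (T (i+1))).NeBot := by
        rw [← mem_closure_iff_nhdsWithin_neBot, closure_Ioc (ne_of_lt hlt)]
        exact ⟨le_rfl, hlt.le⟩
      have htend : Tendsto (fun s => dist (α s) (α (T i)))
          (𝓝[Ioc (T (i+1)) (T i)] (T (i+1))) (𝓝 (dist (α (T (i+1))) (α (T i)))) :=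
        hcw.dist tendsto_const_nhds
      apply le_of_tendsto htend
      filter_upwards [self_mem_nhdsWithin] with s hs
      exact (hnotin s hs.1 hs.2).le
  have hlam_low : ∀ i, (Aof (T i)).Nonempty → T i ∈ Icc (0:ℝ) 1 →
      c * bdist D (α (T i)) ≤ Λ (T i) := by
    intro i hne hi
    obtain ⟨s, hs⟩ := hne
    have h1 := hchordvar s (T i) hs.1.1 hs.1.2 hi.2
    have := hΛ0 s
    linarith [hs.2]
  have hd_ge : ∀ i, T i ∈ Icc (0:ℝ) 1 → bdist D x - Λ (T i) ≤ bdist D (α (T i)) := by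
    intro i hi
    have h1 := bdist_le_add (D := D) x (α (T i))
    have h2 := hchordvar 0 (T i) le_rfl hi.1 hi.2
    rw [hα.source] at h2
    have := hΛ0 0
    linarith
  have hlamθ : ∀ i, (∀ j, j < i+1 → (Aof (T j)).Nonempty) → Λ (T (i+1)) ≤ θ * Λ (T i) := by
    intro i h
    have hi := key_mem i (fun j hj => h j (hj.trans (Nat.lt_succ_self i)))
    have hi1 := key_mem (i+1) h
    have hks := key_step i h
    have hchord := hchordvar (T (i+1)) (T i) hi1.1.1 (hi1.2 i (Nat.le_succ i)) hi.1.2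
    have hcarr := hΛcarrot (T i) hi.1
    have hd : Λ (T i) / a ≤ bdist D (α (T i)) := by rw [div_le_iff₀ ha0]; nlinarith
    have h1 : c * (Λ (T i)/a) ≤ dist (α (T (i+1))) (α (T i)) :=
      le_trans (mul_le_mul_of_nonneg_left hd hc0.le) hks.1
    rw [hθdef]
    calc Λ (T (i+1)) ≤ Λ (T i) - c * (Λ (T i)/a) := by linarith
      _ = (1 - c/a) * Λ (T i) := by ring
  have hlamgeo : ∀ j l : ℕ, (∀ i, i < j + l → (Aof (T i)).Nonempty) →
      Λ (T (j + l)) ≤ θ^l * Λ (T j) := by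
    intro j l
    induction l with
    | zero => intro _; simp
    | succ l ih =>
      intro h
      have h1 := ih (fun i hi => h i (by omega))
      have h2 := hlamθ (j + l) (fun i hi => h i (by omega))
      have heq : j + (l+1) = (j+l)+1 := by omega
      rw [heq]
      calc Λ (T ((j+l)+1)) ≤ θ * Λ (T (j+l)) := h2
        _ ≤ θ * (θ^l * Λ (T j)) := mul_le_mul_of_nonneg_left h1 hθ0.le
        _ = θ^(l+1) * Λ (T j) := by ring
  have hterm : ∃ i, ¬ (Aof (T i)).Nonempty := by
    by_contra hcon
    push_neg at hcon
    have hlow : ∀ i, c * bdist D x / 2 ≤ Λ (T i) := by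
      intro i
      have hi := key_mem i (fun j _ => hcon j)
      have h5 := hlam_low i (hcon i) hi.1
      have hd := hd_ge i hi.1
      nlinarith [hΛ0 (T i), mul_le_mul_of_nonneg_left hd hc0.le,
        mul_nonneg (show (0:ℝ) ≤ 1 - c by linarith) (hΛ0 (T i))]
    obtain ⟨i, hi⟩ := exists_pow_lt_of_lt_one
      (show (0:ℝ) < (c * bdist D x / 2)/(Λ (T 0) + 1) by positivity) hθ1
    have h1 : Λ (T (0 + i)) ≤ θ^i * Λ (T 0) := hlamgeo 0 i (fun j _ => hcon j)
    have h2 := hlow (0 + i)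
    have h3 : θ^i * Λ (T 0) < c * bdist D x / 2 := by
      have h4 : θ^i * (Λ (T 0) + 1) <
          (c * bdist D x / 2)/(Λ (T 0) + 1) * (Λ (T 0) + 1) :=
        mul_lt_mul_of_pos_right hi (by positivity)
      rw [div_mul_cancel₀ _ (show (Λ (T 0) + 1) ≠ 0 by positivity)] at h4
      nlinarith [hΛ0 (T 0), pow_nonneg hθ0.le i]
    linarith
  set M : ℕ := Nat.find hterm with hMdef
  have hMterm : ¬ (Aof (T M)).Nonempty := Nat.find_spec hterm
  have hMgood : ∀ j, j < M → (Aof (T j)).Nonempty := fun j hj =>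
    not_not.1 (Nat.find_min hterm hj)
  have hTIcc : ∀ i, i ≤ M → T i ∈ Icc (0:ℝ) 1 := fun i hi =>
    (key_mem i (fun j hj => hMgood j (lt_of_lt_of_le hj hi))).1
  have hTmono : ∀ i j, j ≤ i → i ≤ M → T i ≤ T j := fun i j hj hi =>
    (key_mem i (fun j' hj' => hMgood j' (lt_of_lt_of_le hj' hi))).2 j hj
  have hpDm : ∀ i, i ≤ M → α (T i) ∈ D := fun i hi => hα.mem _ (hTIcc i hi)
  have hdposm : ∀ i, i ≤ M → 0 < bdist D (α (T i)) := fun i hi =>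
    bdist_pos hDo (hpDm i hi) hDc
  have hvD' : ∀ i, i ≤ M → f (α (T i)) ∈ D' := fun i hi => hmf (hpDm i hi)
  have hd'pos : ∀ i, i ≤ M → 0 < bdist D' (f (α (T i))) := fun i hi =>
    bdist_pos hD'o (hvD' i hi) hD'c
  have hchordlow : ∀ i, i < M → c * bdist D (α (T i)) ≤ dist (α (T (i+1))) (α (T i)) :=
    fun i hi => (key_step i (fun j hj => hMgood j (by omega))).1
  have hchordup : ∀ i, i < M → dist (α (T (i+1))) (α (T i)) ≤ c * bdist D (α (T i)) :=
    fun i hi => (key_step i (fun j hj => hMgood j (by omega))).2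
  have hlam_chord : ∀ i j, j ≤ i → i ≤ M → dist (α (T i)) (α (T j)) ≤ Λ (T j) := by
    intro i j hj hi
    have := hchordvar (T i) (T j) (hTIcc i hi).1 (hTmono i j hj hi) (hTIcc j (hj.trans hi)).2
    linarith [hΛ0 (T i)]
  have hdistx : ∀ i, i ≤ M → dist x (α (T i)) ≤ Λ (T i) := by
    intro i hi
    have := hchordvar 0 (T i) le_rfl (hTIcc i hi).1 (hTIcc i hi).2
    rw [hα.source] at this
    linarith [hΛ0 0]
  have hb : ∀ i, i < M →
      dist (f (α (T (i+1)))) (f (α (T i))) ≤ η (2*c) * bdist D' (f (α (T i))) := by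
    intro i hi
    rw [dist_comm]
    apply qs_image_bound hDo hDc hD'o hD'c hfc hmf hmg hinv.2 hqs (hpDm i hi.le)
      (hpDm (i+1) hi) hc0.le
    rw [dist_comm]
    exact hchordup i hi
  have hterminal : dist (f x) (f (α (T M))) ≤ η (2*c) * bdist D' (f (α (T M))) := by
    rw [dist_comm]
    apply qs_image_bound hDo hDc hD'o hD'c hfc hmf hmg hinv.2 hqs (hpDm M le_rfl) hx hc0.le
    by_contra hcon
    push_neg at hcon
    apply hMterm
    refine ⟨0, ⟨le_rfl, (hTIcc M le_rfl).1⟩, ?_⟩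
    rw [hα.source, dist_comm]
    exact hcon.le
  have hS3 : ∀ j, j < M → ∀ z, z ∈ D → dist (α (T j)) z ≤ Λ (T j) →
      dist (f (α (T j))) (f z) ≤ C7 * bdist D' (f (α (T j))) := by
    intro j hj z hz hdz
    have hcarr := hΛcarrot (T j) (hTIcc j hj.le)
    have hlow := hchordlow j hj
    have hac : (0:ℝ) ≤ a/c := by positivity
    have htr : dist (α (T j)) z ≤ (a/c) * dist (α (T j)) (α (T (j+1))) := by
      rw [dist_comm (α (T j)) (α (T (j+1)))]
      calc dist (α (T j)) z ≤ Λ (T j) := hdz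
        _ ≤ a * bdist D (α (T j)) := hcarr
        _ = (a/c) * (c * bdist D (α (T j))) := by field_simp
        _ ≤ (a/c) * dist (α (T (j+1))) (α (T j)) := mul_le_mul_of_nonneg_left hlow hac
    have hq1 := hqs (α (T j)) (hpDm j hj.le) z hz (α (T (j+1))) (hpDm (j+1) hj) (a/c) hac htr
    calc dist (f (α (T j))) (f z) ≤ η (a/c) * dist (f (α (T j))) (f (α (T (j+1)))) := hq1
      _ ≤ η (a/c) * (η (2*c) * bdist D' (f (α (T j)))) := by
          apply mul_le_mul_of_nonneg_left _ (ηnonneg _ hac)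
          rw [dist_comm]
          exact hb j hj
      _ = C7 * bdist D' (f (α (T j))) := by rw [hC7def]; ring
  have hS3' : ∀ j i, j < M → j ≤ i → i ≤ M →
      dist (f (α (T j))) (f (α (T i))) ≤ C7 * bdist D' (f (α (T j))) := by
    intro j i hj hji hi
    apply hS3 j hj _ (hpDm i hi)
    rw [dist_comm]
    exact hlam_chord i j hji hi
  have hS3x : ∀ j, j < M → dist (f (α (T j))) (f x) ≤ C7 * bdist D' (f (α (T j))) := by
    intro j hj
    apply hS3 j hj x hx
    rw [dist_comm]
    exact hdistx j hj.le
  have hd'comp : ∀ j i, j < M → j ≤ i → i ≤ M →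
      bdist D' (f (α (T i))) ≤ (1 + C7) * bdist D' (f (α (T j))) := by
    intro j i hj hji hi
    have h1 := bdist_le_add (D := D') (f (α (T i))) (f (α (T j)))
    have h2 := hS3' j i hj hji hi
    rw [dist_comm] at h2
    nlinarith []
  have hlamgeoM : ∀ j l : ℕ, j + l ≤ M → Λ (T (j + l)) ≤ θ^l * Λ (T j) := by
    intro j l hjl
    exact hlamgeo j l (fun i hi => hMgood i (by omega))
  have hlam_lowM : ∀ i, i < M → c * bdist D x / 2 ≤ Λ (T i) := by
    intro i hi
    have h5 := hlam_low i (hMgood i hi) (hTIcc i hi.le)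
    have hd := hd_ge i (hTIcc i hi.le)
    nlinarith [hΛ0 (T i), mul_le_mul_of_nonneg_left hd hc0.le,
      mul_nonneg (show (0:ℝ) ≤ 1 - c by linarith) (hΛ0 (T i))]
  have hK₀pos : 0 < K₀ := hK₀1
  have hTS : ∀ j, j ≤ M →
      (∑ i ∈ Finset.Ico j M, dist (f (α (T (i+1)))) (f (α (T i)))) + dist (f x) (f (α (T M)))
        ≤ K * bdist D' (f (α (T j))) := by
    intro j hjM
    rcases eq_or_lt_of_le hjM with heq | hj
    · rw [heq]
      simp only [Finset.Ico_self, Finset.sum_empty, zero_add]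
      calc dist (f x) (f (α (T M))) ≤ η (2*c) * bdist D' (f (α (T M))) := hterminal
        _ ≤ K * bdist D' (f (α (T M))) := by
            apply mul_le_mul_of_nonneg_right _ (bdist_nonneg _)
            have h1 : (0:ℝ) ≤ (N:ℝ)*W0 := by positivity
            have h2 : (0:ℝ) ≤ W1*(2*(K₀:ℝ)) := by positivity
            rw [hKdef]
            linarith [hη2cW0]
    · have hterm_bd : ∀ i ∈ Finset.Ico j M,
          dist (f (α (T (i+1)))) (f (α (T i))) ≤
          (if i - j < N then W0 else W1 * ((2:ℝ)⁻¹)^((i-j)/K₀)) * bdist D' (f (α (T j))) := by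
        intro i hi
        obtain ⟨hji, hiM⟩ := Finset.mem_Ico.1 hi
        by_cases hcase : i - j < N
        · rw [if_pos hcase]
          calc dist (f (α (T (i+1)))) (f (α (T i)))
              ≤ η (2*c) * bdist D' (f (α (T i))) := hb i hiM
            _ ≤ η (2*c) * ((1 + C7) * bdist D' (f (α (T j)))) :=
                mul_le_mul_of_nonneg_left (hd'comp j i hj hji hiM.le)
                  (ηnonneg _ (by positivity))
            _ = W0 * bdist D' (f (α (T j))) := by rw [hW0def]; ring
        · rw [if_neg hcase]
          push_neg at hcase
          set l := i - j with hldef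
          have hjl : j + l = i := by omega
          have hlami : Λ (T i) ≤ θ^l * Λ (T j) := by rw [← hjl]; exact hlamgeoM j l (by omega)
          have hcarrj := hΛcarrot (T j) (hTIcc j hj.le)
          have hlami2 : Λ (T i) ≤ a * θ^l * bdist D (α (T j)) := by
            calc Λ (T i) ≤ θ^l * Λ (T j) := hlami
              _ ≤ θ^l * (a * bdist D (α (T j))) :=
                  mul_le_mul_of_nonneg_left hcarrj (pow_nonneg hθ0.le l)
              _ = a * θ^l * bdist D (α (T j)) := by ring
          have hθlN : θ^l ≤ θ^N := pow_le_pow_of_le_one hθ0.le hθ1.le hcase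
          have hsmall : Λ (T i) ≤ (c/4) * bdist D (α (T j)) := by
            calc Λ (T i) ≤ a * θ^l * bdist D (α (T j)) := hlami2
              _ ≤ (c/4) * bdist D (α (T j)) := by
                  apply mul_le_mul_of_nonneg_right _ (bdist_nonneg _)
                  calc a * θ^l ≤ a * θ^N := mul_le_mul_of_nonneg_left hθlN ha0.le
                    _ ≤ c/4 := hNdecay
          have hlow := hlam_lowM i hiM
          by_cases hdx2 : bdist D x ≤ bdist D (α (T j)) / 2
          swap
          · exfalso
            push_neg at hdx2
            linarith [mul_lt_mul_of_pos_left hdx2 hc0, hlow, hsmall]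
          · have hdi_le : bdist D (α (T i)) ≤ bdist D x + Λ (T i) := by
              have h1 := bdist_le_add (D := D) (α (T i)) x
              have h2 := hdistx i hiM.le
              rw [dist_comm] at h1
              linarith
            have hsep : bdist D (α (T j)) / 4 ≤ dist (α (T i)) (α (T j)) := by
              have h1 := bdist_le_add (D := D) (α (T j)) (α (T i))
              rw [dist_comm] at h1
              nlinarith [mul_nonneg (show (0:ℝ) ≤ 1 - c by linarith)
                (bdist_nonneg (D := D) (α (T j)))]
            have hchord3 : dist (α (T (i+1))) (α (T i)) ≤ 3 * Λ (T i) := by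
              calc dist (α (T (i+1))) (α (T i)) ≤ c * bdist D (α (T i)) := hchordup i hiM
                _ ≤ c * (bdist D x + Λ (T i)) := mul_le_mul_of_nonneg_left hdi_le hc0.le
                _ ≤ 3 * Λ (T i) := by
                    nlinarith [hlow, mul_nonneg (show (0:ℝ) ≤ 1 - c by linarith) (hΛ0 (T i))]
            set q := l / K₀ with hqdef
            have hq0 : q₀ ≤ q := by
              rw [hqdef]
              exact (Nat.le_div_iff_mul_le hK₀pos).2
                (le_trans (le_max_right N₀' (q₀*K₀)) hcase)
            have hratio : 12*a*θ^l ≤ σ^q := by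
              have h1 : θ^l ≤ (θ^K₀)^q := by
                rw [← pow_mul]
                apply pow_le_pow_of_le_one hθ0.le hθ1.le
                rw [hqdef, mul_comm]
                exact Nat.div_mul_le_self l K₀
              have h2 : (θ^K₀)^q ≤ (σ/2)^q := pow_le_pow_left₀ (pow_nonneg hθ0.le _) hθK₀ q
              have h4 : (12*a) ≤ 2^q := le_trans hq₀.le (pow_le_pow_right₀ one_le_two hq0)
              calc 12*a*θ^l ≤ 12*a*((σ/2)^q) :=
                    mul_le_mul_of_nonneg_left (h1.trans h2) (by positivity)
                _ = 12*a*(σ^q/2^q) := by rw [div_pow]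
                _ ≤ 2^q*(σ^q/2^q) := mul_le_mul_of_nonneg_right h4 (by positivity)
                _ = σ^q := by field_simp
            have hchain_pre : dist (α (T i)) (α (T (i+1))) ≤ σ^q * dist (α (T i)) (α (T j)) := by
              rw [dist_comm (α (T i)) (α (T (i+1)))]
              calc dist (α (T (i+1))) (α (T i)) ≤ 3 * Λ (T i) := hchord3
                _ ≤ 3 * (a * θ^l * bdist D (α (T j))) :=
                    mul_le_mul_of_nonneg_left hlami2 (by norm_num)
                _ = (12*a*θ^l) * (bdist D (α (T j)) / 4) := by ring
                _ ≤ (12*a*θ^l) * dist (α (T i)) (α (T j)) := by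
                    apply mul_le_mul_of_nonneg_left hsep
                    positivity
                _ ≤ σ^q * dist (α (T i)) (α (T j)) :=
                    mul_le_mul_of_nonneg_right hratio dist_nonneg
            have hchain := chain_bound hDconn.isPreconnected hqs hσpos hσ1 hησ
              (ηnonneg 1 zero_le_one) (hpDm i hiM.le) (hpDm (i+1) hiM) (hpDm j hj.le)
              q hchain_pre
            have hvij : dist (f (α (T i))) (f (α (T j))) ≤ C7 * bdist D' (f (α (T j))) := by
              rw [dist_comm]; exact hS3' j i hj hji hiM.le
            calc dist (f (α (T (i+1)))) (f (α (T i)))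
                = dist (f (α (T i))) (f (α (T (i+1)))) := dist_comm _ _
              _ ≤ η 1 * ((1/2)^q * dist (f (α (T i))) (f (α (T j)))) := hchain
              _ ≤ η 1 * ((1/2)^q * (C7 * bdist D' (f (α (T j))))) := by
                  apply mul_le_mul_of_nonneg_left _ hη1pos.le
                  exact mul_le_mul_of_nonneg_left hvij (by positivity)
              _ = (W1 * ((2:ℝ)⁻¹)^q) * bdist D' (f (α (T j))) := by
                  rw [hW1def, one_div]; ring
      calc (∑ i ∈ Finset.Ico j M, dist (f (α (T (i+1)))) (f (α (T i))))
            + dist (f x) (f (α (T M)))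
          ≤ (∑ i ∈ Finset.Ico j M, (if i - j < N then W0 else W1 * ((2:ℝ)⁻¹)^((i-j)/K₀))
              * bdist D' (f (α (T j)))) + W0 * bdist D' (f (α (T j))) := by
            apply add_le_add (Finset.sum_le_sum hterm_bd)
            calc dist (f x) (f (α (T M))) ≤ η (2*c) * bdist D' (f (α (T M))) := hterminal
              _ ≤ η (2*c) * ((1+C7) * bdist D' (f (α (T j)))) :=
                  mul_le_mul_of_nonneg_left (hd'comp j M hj hjM le_rfl)
                    (ηnonneg _ (by positivity))
              _ = W0 * bdist D' (f (α (T j))) := by rw [hW0def]; ring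
        _ ≤ ((N:ℝ)*W0 + W1*(2*(K₀:ℝ))) * bdist D' (f (α (T j)))
            + W0 * bdist D' (f (α (T j))) := by
            apply add_le_add_left
            rw [← Finset.sum_mul]
            apply mul_le_mul_of_nonneg_right _ (bdist_nonneg _)
            have hre : (∑ i ∈ Finset.Ico j M,
                (if i - j < N then W0 else W1 * ((2:ℝ)⁻¹)^((i-j)/K₀)))
                = ∑ l ∈ Finset.range (M - j),
                    (if l < N then W0 else W1 * ((2:ℝ)⁻¹)^(l/K₀)) := by
              rw [Finset.sum_Ico_eq_sum_range]
              apply Finset.sum_congr rfl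
              intro l _
              simp only [Nat.add_sub_cancel_left]
            rw [hre]
            calc ∑ l ∈ Finset.range (M - j), (if l < N then W0 else W1 * ((2:ℝ)⁻¹)^(l/K₀))
                ≤ ∑ l ∈ Finset.range (M - j),
                    ((if l < N then W0 else 0) + W1 * ((2:ℝ)⁻¹)^(l/K₀)) := by
                  apply Finset.sum_le_sum
                  intro l _
                  by_cases hl : l < N
                  · simp only [if_pos hl]
                    have : (0:ℝ) ≤ W1 * ((2:ℝ)⁻¹)^(l/K₀) := by positivity
                    linarith
                  · simp only [if_neg hl, zero_add]
                    exact le_rfl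
              _ = (∑ l ∈ Finset.range (M - j), (if l < N then W0 else 0))
                  + W1 * ∑ l ∈ Finset.range (M - j), ((2:ℝ)⁻¹)^(l/K₀) := by
                  rw [Finset.sum_add_distrib, Finset.mul_sum]
              _ ≤ (N:ℝ)*W0 + W1*(2*(K₀:ℝ)) := by
                  apply add_le_add
                  · rw [← Finset.sum_filter]
                    have hsub : (Finset.range (M-j)).filter (· < N) ⊆ Finset.range N := by
                      intro l hl
                      rw [Finset.mem_range]
                      exact (Finset.mem_filter.1 hl).2
                    have hcard : ((Finset.range (M-j)).filter (· < N)).card ≤ N := by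
                      calc _ ≤ (Finset.range N).card := Finset.card_le_card hsub
                        _ = N := Finset.card_range N
                    rw [Finset.sum_const, nsmul_eq_mul]
                    apply mul_le_mul_of_nonneg_right _ hW0
                    exact_mod_cast hcard
                  · apply mul_le_mul_of_nonneg_left _ hW1
                    exact blocky_geom_sum K₀ hK₀1 (M - j)
        _ = K * bdist D' (f (α (T j))) := by rw [hKdef]; ring
  set u : ℕ → EuclideanSpace ℝ (Fin n) :=
    fun l => if l = 0 then f x else f (α (T (M + 1 - l))) with hudef
  have hu0 : u 0 = f x := by simp [hudef]
  have hulsucc : ∀ l, l ≤ M → u (l+1) = f (α (T (M - l))) := by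
    intro l hl
    simp only [hudef]
    rw [if_neg (Nat.succ_ne_zero l)]
    rw [show M + 1 - (l+1) = M - l by omega]
  have huMend : u (M+1) = f (α (T 0)) := by
    simp only [hudef]
    rw [if_neg (Nat.succ_ne_zero M)]
    rw [show M + 1 - (M+1) = 0 by omega]
  have hseg : ∀ l, l ≤ M → dist (u (l+1)) (u l) ≤ η (2*c) * bdist D' (f (α (T (M - l)))) := by
    intro l hl
    rcases Nat.eq_zero_or_pos l with h0 | hpos
    · subst h0
      rw [hulsucc 0 (Nat.zero_le M), hu0]
      simp only [Nat.sub_zero]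
      rw [dist_comm]
      exact hterminal
    · rw [hulsucc l hl]
      have hl1 : u l = f (α (T ((M - l) + 1))) := by
        have h2 := hulsucc (l-1) (by omega)
        rw [show (l-1)+1 = l by omega] at h2
        rw [h2, show M - (l-1) = (M - l) + 1 by omega]
      rw [hl1, dist_comm]
      exact hb (M - l) (by omega)
  have hmain : ∀ s ∈ Icc (0:ℝ) 1, polyline u M s ∈ D' ∧
      eVariationOn (polyline u M) (Icc 0 s) ≤
        ENNReal.ofReal ((4/3*K + 1) * bdist D' (polyline u M s)) := by
    intro s hs
    set r := s * ((M:ℝ) + 1) with hrdef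
    have hr0 : 0 ≤ r := mul_nonneg hs.1 (by positivity)
    set k := min M ⌊r⌋₊ with hkdef
    have hkM : k ≤ M := min_le_left _ _
    have hk1 : (k:ℝ) ≤ r := by
      calc (k:ℝ) ≤ (⌊r⌋₊:ℝ) := by exact_mod_cast min_le_right M ⌊r⌋₊
        _ ≤ r := Nat.floor_le hr0
    have hk2 : r ≤ (k:ℝ) + 1 := by
      rcases le_or_gt (⌊r⌋₊) M with hfl | hfl
      · rw [show k = ⌊r⌋₊ from min_eq_right hfl]
        exact (Nat.lt_floor_add_one r).le
      · rw [show k = M from min_eq_left hfl.le]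
        rw [hrdef]
        nlinarith [hs.2]
    have hvert : u (k+1) = f (α (T (M - k))) := hulsucc k hkM
    have hd'v : 0 < bdist D' (u (k+1)) := by
      rw [hvert]; exact hd'pos (M-k) (by omega)
    have hdist_right : dist (polyline u M s) (u (k+1)) ≤ (1/4) * bdist D' (u (k+1)) := by
      calc dist (polyline u M s) (u (k+1)) ≤ dist (u (k+1)) (u k) :=
            polyline_piece_dist_right u M hkM hk1 hk2
        _ ≤ η (2*c) * bdist D' (f (α (T (M - k)))) := hseg k hkM
        _ ≤ (1/4) * bdist D' (u (k+1)) := by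
            rw [hvert]
            exact mul_le_mul_of_nonneg_right hηc (bdist_nonneg _)
    have hmem : polyline u M s ∈ D' := by
      apply mem_of_dist_lt_bdist (D := D') (x := u (k+1))
      calc dist (polyline u M s) (u (k+1)) ≤ (1/4) * bdist D' (u (k+1)) := hdist_right
        _ < bdist D' (u (k+1)) := by linarith
    refine ⟨hmem, ?_⟩
    have hbd_low : (3/4) * bdist D' (u (k+1)) ≤ bdist D' (polyline u M s) := by
      have h1 := bdist_le_add (D := D') (u (k+1)) (polyline u M s)
      rw [dist_comm] at h1
      linarith [hdist_right]
    have hvar := polyline_evar_le u M k hkM s hk1 hk2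
    have hsum : ∑ l ∈ Finset.range (k+1), dist (u (l+1)) (u l)
        ≤ K * bdist D' (u (k+1)) := by
      have hTS' := hTS (M - k) (by omega)
      rw [hvert]
      refine le_trans (le_of_eq ?_) hTS'
      rw [Finset.sum_range_succ']
      congr 1
      · apply Finset.sum_nbij' (fun j => M - (j+1)) (fun i => M - (i+1))
        · intro j hj
          rw [Finset.mem_range] at hj
          rw [Finset.mem_Ico]
          omega
        · intro i hi
          rw [Finset.mem_Ico] at hi
          rw [Finset.mem_range]
          omega
        · intro j hj
          rw [Finset.mem_range] at hj
          omega
        · intro i hi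
          rw [Finset.mem_Ico] at hi
          omega
        · intro j hj
          rw [Finset.mem_range] at hj
          rw [hulsucc (j+1) (by omega)]
          have h2 : u (j+1) = f (α (T ((M - (j+1)) + 1))) := by
            rw [hulsucc j (by omega), show M - j = (M - (j+1)) + 1 by omega]
          rw [h2, dist_comm]
      · rw [hulsucc 0 (Nat.zero_le M), hu0]
        simp only [Nat.sub_zero]
        exact dist_comm _ _
    refine le_trans hvar (ENNReal.ofReal_le_ofReal ?_)
    calc ∑ l ∈ Finset.range (k+1), dist (u (l+1)) (u l)
        ≤ K * bdist D' (u (k+1)) := hsum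
      _ ≤ (4/3*K) * bdist D' (polyline u M s) := by
          have h3 := mul_le_mul_of_nonneg_left hbd_low (show (0:ℝ) ≤ 4/3*K by positivity)
          calc K * bdist D' (u (k+1)) = (4/3*K) * ((3/4) * bdist D' (u (k+1))) := by ring
            _ ≤ (4/3*K) * bdist D' (polyline u M s) := h3
      _ ≤ (4/3*K + 1) * bdist D' (polyline u M s) := by
          have h4 := bdist_nonneg (D := D') (polyline u M s)
          nlinarith
  refine ⟨polyline u M, ⟨(polyline_continuous u M).continuousOn,
    fun t ht => (hmain t ht).1, ?_, ?_⟩, fun t ht => (hmain t ht).2⟩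
  · rw [polyline_zero, hu0, hfx]
  · rw [polyline_one, huMend, hT0, hα.target]
end MainProof
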